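/- There exists a set P of 60 points in the unit square [0,1]^2 whose anchored star discrepancy satisfies D*(P) ≤ 0.02943972, i.e., for every (a,b) ∈ [0,1]^2, the quantity |(1/60)·#(P ∩ ([0,a) × [0,b))) − a·b| is at most 0.02943972. -/
import Mathlib

namespace StarDisc60

def pL : List (Nat × Nat) := [(185, 21), (241, 613), (42, 924), (64, 57), (47, 721), (326, 1116), (415, 452), (286, 873), (350, 205), (90, 383), (125, 995), (133, 277), (164, 770), (621, 1154), (296, 299), (486, 965), (274, 429), (593, 341), (152, 1079), (369, 493), (387, 805), (219, 152), (532, 534), (427, 1040), (452, 222), (511, 687), (547, 1179), (734, 184), (570, 821), (544, 42), (9, 550), (872, 1138), (708, 414), (811, 742), (654, 129), (624, 587), (679, 944), (830, 320), (682, 906), (762, 1065), (466, 635), (915, 707), (786, 103), (1018, 565), (1098, 792), (759, 663), (1119, 851), (958, 374), (989, 155), (1026, 1089), (1166, 160), (862, 851), (1195, 1157), (885, 237), (1188, 881), (1136, 271), (930, 480), (970, 1003), (1052, 87), (1076, 504)]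

def XT : List Nat := [9, 42, 47, 64, 90, 125, 133, 152, 164, 185, 219, 241, 274, 286, 296, 326, 350, 369, 387, 415, 427, 452, 466, 486, 511, 532, 544, 547, 570, 593, 621, 624, 654, 679, 682, 708, 734, 759, 762, 786, 811, 830, 862, 872, 885, 915, 930, 958, 970, 989, 1018, 1026, 1052, 1076, 1098, 1119, 1136, 1166, 1188, 1195, 1200]

def YT : List Nat := [21, 42, 57, 87, 103, 129, 152, 155, 160, 184, 205, 222, 237, 271, 277, 299, 320, 341, 374, 383, 414, 429, 452, 480, 493, 504, 534, 550, 565, 587, 613, 635, 663, 687, 707, 721, 742, 770, 792, 805, 821, 851, 873, 881, 906, 924, 944, 965, 995, 1003, 1040, 1065, 1079, 1089, 1116, 1138, 1154, 1157, 1179, 1200]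

/-- the embedding of scaled integer points into the unit square -/
noncomputable def emb (q : Nat × Nat) : ℝ × ℝ := ((q.1 : ℝ) / 1200, (q.2 : ℝ) / 1200)

noncomputable def P : Finset (ℝ × ℝ) := pL.toFinset.image emb

lemma emb_inj : Function.Injective emb := by
  intro q q' h
  have h1 : ((q.1 : ℝ) / 1200) = (q'.1 : ℝ) / 1200 := congrArg Prod.fst h
  have h2 : ((q.2 : ℝ) / 1200) = (q'.2 : ℝ) / 1200 := congrArg Prod.snd h
  have e1 : (q.1 : ℝ) = (q'.1 : ℝ) := by linarith
  have e2 : (q.2 : ℝ) = (q'.2 : ℝ) := by linarith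
  exact Prod.ext (Nat.cast_injective e1) (Nat.cast_injective e2)

lemma pL_nodup : pL.Nodup := by decide

lemma card_P : P.card = 60 := by
  rw [P, Finset.card_image_of_injective _ emb_inj, List.toFinset_card_of_nodup pL_nodup]
  decide

lemma coord_bounds : ∀ q ∈ pL, q.1 ≤ 1200 ∧ q.2 ≤ 1200 := by decide

lemma mem_XT : ∀ q ∈ pL, q.1 ∈ (0 :: XT) := by decide
lemma mem_YT : ∀ q ∈ pL, q.2 ∈ (0 :: YT) := by decide

lemma XT_sorted : (0 :: XT).Pairwise (· < ·) := by decide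
lemma YT_sorted : (0 :: YT).Pairwise (· < ·) := by decide

/-- locate a real number between consecutive entries of a list -/
lemma locate (f : ℕ → ℝ) : ∀ (x : ℕ) (l : List ℕ) (a : ℝ),
    f x < a → a ≤ f ((x :: l).getLast (by simp)) →
    ∃ pr ∈ (x :: l).zip l, f pr.1 < a ∧ a ≤ f pr.2 := by
  intro x l
  induction l generalizing x with
  | nil =>
    intro a h1 h2
    simp only [List.getLast_singleton] at h2
    exact absurd (h1.trans_le h2) (lt_irrefl _)
  | cons y t ih =>
    intro a h1 h2
    rcases le_or_gt a (f y) with h | h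
    · exact ⟨(x, y), by simp [List.zip_cons_cons], h1, h⟩
    · obtain ⟨pr, hm, h3, h4⟩ := ih y a h (by rwa [List.getLast_cons_cons] at h2)
      exact ⟨pr, by simp only [List.zip_cons_cons, List.mem_cons]; exact Or.inr hm, h3, h4⟩

/-- no list entry lies strictly between consecutive entries -/
lemma gap : ∀ (l : List ℕ), l.Pairwise (· < ·) →
    ∀ pr ∈ l.zip l.tail, ∀ v ∈ l, v ≤ pr.1 ∨ pr.2 ≤ v := by
  intro l
  induction l with
  | nil => simp
  | cons x t ih =>
    intro hp pr hpr v hv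
    cases t with
    | nil => simp at hpr
    | cons y s =>
      rw [List.tail_cons, List.zip_cons_cons, List.mem_cons] at hpr
      have hp1 := (List.pairwise_cons.1 hp).1
      have hp2 := (List.pairwise_cons.1 hp).2
      rcases hpr with rfl | hpr
      · rcases List.mem_cons.1 hv with rfl | hv'
        · exact Or.inl le_rfl
        · rcases List.mem_cons.1 hv' with rfl | hv''
          · exact Or.inr le_rfl
          · exact Or.inr (le_of_lt ((List.pairwise_cons.1 hp2).1 v hv''))
      · obtain ⟨p1, p2⟩ := pr
        rcases List.mem_cons.1 hv with rfl | hv'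
        · exact Or.inl (le_of_lt (hp1 _ (List.of_mem_zip hpr).1))
        · exact ih hp2 (p1, p2) (by simpa using hpr) v hv'

set_option maxHeartbeats 4000000 in
set_option maxRecDepth 100000 in
/-- the master combinatorial inequality, checked by kernel computation -/
lemma master : ∀ pr1 ∈ (0 :: XT).zip XT, ∀ pr2 ∈ (0 :: YT).zip YT,
    (pL.filter (fun q => decide (q.1 ≤ pr1.1 ∧ q.2 ≤ pr2.1))).length * 144000000000000 ≤
        6000000000 * (pr1.1 * pr2.1) + 254359180800000 ∧
      6000000000 * (pr1.2 * pr2.2) ≤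
        (pL.filter (fun q => decide (q.1 ≤ pr1.1 ∧ q.2 ≤ pr2.1))).length * 144000000000000 +
          254359180800000 := by decide

lemma P_mem_Icc : ∀ p ∈ P, p.1 ∈ Set.Icc (0 : ℝ) 1 ∧ p.2 ∈ Set.Icc (0 : ℝ) 1 := by
  intro p hp
  rw [P, Finset.mem_image] at hp
  obtain ⟨q, hq, rfl⟩ := hp
  obtain ⟨h1, h2⟩ := coord_bounds q (List.mem_toFinset.1 hq)
  simp only [emb]
  have c1 : ((q.1 : ℝ)) ≤ 1200 := by exact_mod_cast h1
  have c2 : ((q.2 : ℝ)) ≤ 1200 := by exact_mod_cast h2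
  constructor
  · exact ⟨by positivity, by rw [div_le_one (by norm_num)]; exact c1⟩
  · exact ⟨by positivity, by rw [div_le_one (by norm_num)]; exact c2⟩

/-- counting lemma: identify the real filter count with the integer count -/
lemma count_eq (a b : ℝ) (u u' v v' : ℕ)
    (hua : (u : ℝ) / 1200 < a) (hau' : a ≤ (u' : ℝ) / 1200)
    (hvb : (v : ℝ) / 1200 < b) (hbv' : b ≤ (v' : ℝ) / 1200)
    (hgx : ∀ q ∈ pL, q.1 ≤ u ∨ u' ≤ q.1)
    (hgy : ∀ q ∈ pL, q.2 ≤ v ∨ v' ≤ q.2) :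
    (P.filter (fun p => 0 ≤ p.1 ∧ p.1 < a ∧ 0 ≤ p.2 ∧ p.2 < b)).card =
      (pL.filter (fun q => decide (q.1 ≤ u ∧ q.2 ≤ v))).length := by
  classical
  rw [P, Finset.filter_image]
  rw [Finset.card_image_of_injective _ emb_inj]
  have hiff : ∀ q ∈ pL.toFinset,
      ((fun p : ℝ × ℝ => 0 ≤ p.1 ∧ p.1 < a ∧ 0 ≤ p.2 ∧ p.2 < b) (emb q) ↔
        (q.1 ≤ u ∧ q.2 ≤ v)) := by
    intro q hq
    have hq' := List.mem_toFinset.1 hq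
    simp only [emb]
    constructor
    · rintro ⟨-, h1, -, h2⟩
      constructor
      · rcases hgx q hq' with h | h
        · exact h
        · exfalso
          have hc : ((u' : ℝ)) ≤ (q.1 : ℝ) := by exact_mod_cast h
          have : a ≤ (q.1 : ℝ) / 1200 := hau'.trans (by linarith)
          exact absurd (this.trans_lt h1) (lt_irrefl _)
      · rcases hgy q hq' with h | h
        · exact h
        · exfalso
          have hc : ((v' : ℝ)) ≤ (q.2 : ℝ) := by exact_mod_cast h
          have : b ≤ (q.2 : ℝ) / 1200 := hbv'.trans (by linarith)
          exact absurd (this.trans_lt h2) (lt_irrefl _)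
    · rintro ⟨h1, h2⟩
      have hc1 : ((q.1 : ℝ)) ≤ (u : ℝ) := by exact_mod_cast h1
      have hc2 : ((q.2 : ℝ)) ≤ (v : ℝ) := by exact_mod_cast h2
      exact ⟨by positivity, lt_of_le_of_lt (by linarith) hua,
        by positivity, lt_of_le_of_lt (by linarith) hvb⟩
  rw [Finset.filter_congr hiff]
  have he : Finset.filter (fun x => x.1 ≤ u ∧ x.2 ≤ v) pL.toFinset
      = (pL.filter (fun q => decide (q.1 ≤ u ∧ q.2 ≤ v))).toFinset := by
    rw [List.toFinset_filter]
    apply Finset.filter_congr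
    intro x _
    simp
  rw [he, List.toFinset_card_of_nodup (pL_nodup.filter _)]

end StarDisc60

open StarDisc60 in
/-- A set of 60 points in the unit square with anchored star discrepancy at most 0.02943972. -/
theorem star_discrepancy_60 : ∃ P : Finset (ℝ × ℝ),
    P.card = 60 ∧
    (∀ p ∈ P, p.1 ∈ Set.Icc (0:ℝ) 1 ∧ p.2 ∈ Set.Icc (0:ℝ) 1) ∧
    ∀ a b : ℝ, a ∈ Set.Icc (0:ℝ) 1 → b ∈ Set.Icc (0:ℝ) 1 →
      |(((P.filter (fun p => 0 ≤ p.1 ∧ p.1 < a ∧ 0 ≤ p.2 ∧ p.2 < b)).card : ℝ)) / 60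
        - a * b| ≤ 0.02943972 := by
  refine ⟨P, card_P, P_mem_Icc, ?_⟩
  intro a b ha hb
  obtain ⟨ha0, ha1⟩ := ha
  obtain ⟨hb0, hb1⟩ := hb
  have heps : (0.02943972 : ℝ) = 2943972 / 100000000 := by norm_num
  rcases eq_or_lt_of_le ha0 with rfl | hapos
  · have he : P.filter (fun p => 0 ≤ p.1 ∧ p.1 < (0:ℝ) ∧ 0 ≤ p.2 ∧ p.2 < b) = ∅ := by
      apply Finset.filter_false_of_mem
      intro p _ h
      exact absurd (h.1.trans_lt h.2.1) (lt_irrefl 0)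
    rw [he, heps]
    norm_num
  rcases eq_or_lt_of_le hb0 with rfl | hbpos
  · have he : P.filter (fun p => 0 ≤ p.1 ∧ p.1 < a ∧ 0 ≤ p.2 ∧ p.2 < (0:ℝ)) = ∅ := by
      apply Finset.filter_false_of_mem
      intro p _ h
      exact absurd (h.2.2.1.trans_lt h.2.2.2) (lt_irrefl 0)
    rw [he, heps]
    norm_num
  -- locate a and b in the grids
  have hlastX : ((0 :: XT).getLast (by simp)) = 1200 := by decide
  have hlastY : ((0 :: YT).getLast (by simp)) = 1200 := by decide
  obtain ⟨⟨u, u'⟩, hmx, hua, hau'⟩ := locate (fun n => (n : ℝ) / 1200) 0 XT a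
    (by simpa using hapos) (by rw [hlastX]; norm_num; exact ha1)
  obtain ⟨⟨v, v'⟩, hmy, hvb, hbv'⟩ := locate (fun n => (n : ℝ) / 1200) 0 YT b
    (by simpa using hbpos) (by rw [hlastY]; norm_num; exact hb1)
  simp only at hua hau' hvb hbv'
  have hgx : ∀ q ∈ pL, q.1 ≤ u ∨ u' ≤ q.1 := fun q hq =>
    gap (0 :: XT) XT_sorted (u, u') hmx q.1 (mem_XT q hq)
  have hgy : ∀ q ∈ pL, q.2 ≤ v ∨ v' ≤ q.2 := fun q hq =>
    gap (0 :: YT) YT_sorted (v, v') hmy q.2 (mem_YT q hq)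
  rw [count_eq a b u u' v v' hua hau' hvb hbv' hgx hgy]
  obtain ⟨m1, m2⟩ := master (u, u') hmx (v, v') hmy
  simp only at m1 m2
  have mc1 : ((pL.filter (fun q => decide (q.1 ≤ u ∧ q.2 ≤ v))).length : ℝ) * 144000000000000 ≤
      6000000000 * ((u : ℝ) * (v : ℝ)) + 254359180800000 := by exact_mod_cast m1
  have mc2 : 6000000000 * ((u' : ℝ) * (v' : ℝ)) ≤
      ((pL.filter (fun q => decide (q.1 ≤ u ∧ q.2 ≤ v))).length : ℝ) * 144000000000000 +
        254359180800000 := by exact_mod_cast m2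
  have hll : ((u : ℝ) / 1200) * ((v : ℝ) / 1200) ≤ a * b :=
    mul_le_mul hua.le hvb.le (by positivity) ha0
  have huu : a * b ≤ ((u' : ℝ) / 1200) * ((v' : ℝ) / 1200) :=
    mul_le_mul hau' hbv' hb0 (by positivity)
  rw [heps, abs_le]
  constructor
  · nlinarith [mc2, huu]
  · nlinarith [mc1, hll]
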